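/- Let G be an undirected graph on vertex set V with unit edge weights, let a, b, v be three distinct vertices such that v has degree 0 in G. Form the weighted graph H by adding edges (a, v) and (b, v) each with weight −1, keeping all edges of G at weight +1. If G has no self-loops, then H contains a cycle of negative total weight if and only if (a, b) is an edge of G. -/

import Mathlib

open scoped Classical

private lemma sum_map_ite {α : Type*} (P : α → Prop) [DecidablePred P]
    (W : α → ℤ) (hW : ∀ e, W e = if P e then -1 else 1) :
    ∀ L : List α, (L.map W).sum = (L.length : ℤ) - 2 * (L.countP (fun e => decide (P e)) : ℤ)
  | [] => by simp
  | e :: L => by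
    rw [List.map_cons, List.sum_cons, sum_map_ite P W hW L, hW]
    by_cases h : P e <;> simp [h, List.countP_cons] <;> ring

private lemma tri {V : Type*} {G : SimpleGraph V} {a b v : V}
    (hab : a ≠ b) (hav : a ≠ v) (hbv : b ≠ v)
    {x : V}
    (c : (SimpleGraph.fromRel (fun p q =>
      G.Adj p q ∨ (p = a ∧ q = v) ∨ (p = b ∧ q = v))).Walk x x)
    (hlen : c.length = 3)
    (h1 : s(a,v) ∈ c.edges) (h2 : s(b,v) ∈ c.edges) : G.Adj a b := by
  have hGA : ∀ p q : V, p ≠ v → q ≠ v →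
      (SimpleGraph.fromRel (fun p q =>
        G.Adj p q ∨ (p = a ∧ q = v) ∨ (p = b ∧ q = v))).Adj p q → G.Adj p q := by
    intro p q hp hq h
    rw [SimpleGraph.fromRel_adj] at h
    rcases h.2 with (h|⟨rfl,rfl⟩|⟨rfl,rfl⟩)|(h|⟨rfl,rfl⟩|⟨rfl,rfl⟩)
    exacts [h, absurd rfl hq, absurd rfl hq, h.symm, absurd rfl hp, absurd rfl hp]
  cases c with
  | nil => simp at hlen
  | cons hxy p =>
    cases p with
    | nil => simp at hlen
    | cons hyz q =>
      cases q with
      | nil => simp at hlen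
      | cons hzw r =>
        cases r with
        | cons h s => simp at hlen
        | nil =>
          simp only [SimpleGraph.Walk.edges_cons, SimpleGraph.Walk.edges_nil,
            List.mem_cons, List.not_mem_nil, or_false, Sym2.eq_iff] at h1 h2
          rcases h1 with (⟨rfl,rfl⟩|⟨rfl,rfl⟩)|(⟨rfl,rfl⟩|⟨rfl,rfl⟩)|(⟨rfl,rfl⟩|⟨rfl,rfl⟩) <;>
            rcases h2 with (⟨h3,h4⟩|⟨h3,h4⟩)|(⟨h3,h4⟩|⟨h3,h4⟩)|(⟨h3,h4⟩|⟨h3,h4⟩) <;>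
            first
              | exact absurd h3 hab
              | exact absurd h3 hab.symm
              | exact absurd h3 hav
              | exact absurd h3 hav.symm
              | exact absurd h3 hbv
              | exact absurd h3 hbv.symm
              | exact absurd h4 hab
              | exact absurd h4 hab.symm
              | exact absurd h4 hav
              | exact absurd h4 hav.symm
              | exact absurd h4 hbv
              | exact absurd h4 hbv.symm
              | (subst_vars;
                 first
                   | exact hGA _ _ hav hbv hxy
                   | exact (hGA _ _ hbv hav hxy).symm
                   | exact hGA _ _ hav hbv hyz
                   | exact (hGA _ _ hbv hav hyz).symm
                   | exact hGA _ _ hav hbv hzw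
                   | exact (hGA _ _ hbv hav hzw).symm)

/-- Let `a, b, v` be distinct vertices of a simple graph `G` with `v`
isolated.  Add edges `(a,v)` and `(b,v)` of weight `-1`, all edges of `G`
having weight `+1`.  The resulting graph has a negative weight (simple) cycle
iff `(a,b)` is an edge of `G`. -/
theorem stmt_9 {V : Type*} (G : SimpleGraph V) (a b v : V)
    (hab : a ≠ b) (hav : a ≠ v) (hbv : b ≠ v)
    (hiso : ∀ x : V, ¬ G.Adj v x)
    (H : SimpleGraph V)
    (hH : H = SimpleGraph.fromRel (fun p q =>
      G.Adj p q ∨ (p = a ∧ q = v) ∨ (p = b ∧ q = v)))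
    (W : Sym2 V → ℤ)
    (hW : ∀ e : Sym2 V, W e = if e = s(a, v) ∨ e = s(b, v) then -1 else 1) :
    (∃ (x : V) (c : H.Walk x x), c.IsCycle ∧ (c.edges.map W).sum < 0)
      ↔ G.Adj a b := by
  subst hH
  have hsav : s(a,b) ≠ s(a,v) := by simp [Sym2.eq_iff]; tauto
  have hsbv : s(a,b) ≠ s(b,v) := by simp [Sym2.eq_iff]; tauto
  have havbv : s(a,v) ≠ s(b,v) := by simp [Sym2.eq_iff]; tauto
  constructor
  · rintro ⟨x, c, hc, hneg⟩
    set P : Sym2 V → Prop := fun e => e = s(a,v) ∨ e = s(b,v) with hP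
    have hsum := sum_map_ite P W (fun e => hW e) c.edges
    have hnodup : c.edges.Nodup := hc.edges_nodup
    have hcount : c.edges.countP (fun e => decide (P e)) =
        (c.edges.filter (fun e => decide (P e))).length :=
      c.edges.countP_eq_length_filter
    have hfnd : (c.edges.filter (fun e => decide (P e))).Nodup := hnodup.filter _
    have hk2 : c.edges.countP (fun e => decide (P e)) ≤ 2 := by
      have hsub : c.edges.filter (fun e => decide (P e)) ⊆ [s(a,v), s(b,v)] := by
        intro e he
        have h1 := (List.mem_filter.1 he).2
        have : P e := by simpa using h1
        simpa using this
      have := (hfnd.subperm hsub).length_le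
      simpa [hcount] using this
    have hlen3 : 3 ≤ c.edges.length := by
      rw [c.length_edges]; exact hc.three_le_length
    have hk : c.edges.countP (fun e => decide (P e)) = 2 ∧ c.edges.length = 3 := by
      rw [hsum] at hneg
      omega
    have hlen : c.length = 3 := by rw [← c.length_edges]; exact hk.2
    have hmem_av : s(a,v) ∈ c.edges := by
      by_contra hn
      have hsub : c.edges.filter (fun e => decide (P e)) ⊆ [s(b,v)] := by
        intro e he
        have h2 : P e := by simpa using (List.mem_filter.1 he).2
        rcases h2 with rfl | rfl
        · exact absurd (List.mem_filter.1 he).1 hn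
        · simp
      have := (hfnd.subperm hsub).length_le
      simp only [List.length_singleton] at this
      omega
    have hmem_bv : s(b,v) ∈ c.edges := by
      by_contra hn
      have hsub : c.edges.filter (fun e => decide (P e)) ⊆ [s(a,v)] := by
        intro e he
        have h2 : P e := by simpa using (List.mem_filter.1 he).2
        rcases h2 with rfl | rfl
        · simp
        · exact absurd (List.mem_filter.1 he).1 hn
      have := (hfnd.subperm hsub).length_le
      simp only [List.length_singleton] at this
      omega
    exact tri hab hav hbv _ hlen hmem_av hmem_bv
  · intro hGab
    have h1 : (SimpleGraph.fromRel (fun p q =>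
        G.Adj p q ∨ (p = a ∧ q = v) ∨ (p = b ∧ q = v))).Adj a b :=
      (SimpleGraph.fromRel_adj _ _ _).2 ⟨hab, Or.inl (Or.inl hGab)⟩
    have h2 : (SimpleGraph.fromRel (fun p q =>
        G.Adj p q ∨ (p = a ∧ q = v) ∨ (p = b ∧ q = v))).Adj b v :=
      (SimpleGraph.fromRel_adj _ _ _).2 ⟨hbv, Or.inl (Or.inr (Or.inr ⟨rfl, rfl⟩))⟩
    have h3 : (SimpleGraph.fromRel (fun p q =>
        G.Adj p q ∨ (p = a ∧ q = v) ∨ (p = b ∧ q = v))).Adj v a :=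
      (SimpleGraph.fromRel_adj _ _ _).2 ⟨fun h => hav h.symm, Or.inr (Or.inr (Or.inl ⟨rfl, rfl⟩))⟩
    refine ⟨a, .cons h1 (.cons h2 (.cons h3 .nil)), ?_, ?_⟩
    · rw [SimpleGraph.Walk.isCycle_def]
      refine ⟨?_, by simp, ?_⟩
      · rw [SimpleGraph.Walk.isTrail_def]
        simp [Sym2.eq_iff]
        tauto
      · simp [hab, hav, hbv]
        tauto
    · have hvA : s(v,a) = s(a,v) := Sym2.eq_swap
      simp [hW, hsav, hsbv, hvA]
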